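/- Let Γ be a surjunctive group. Then Γ satisfies Kaplansky's stable finiteness conjecture: for every field F and every d ≥ 1, the matrix ring M_d(F[Γ]) is directly finite. -/

import Mathlib

/-- A group is Hopfian if every surjective endomorphism is injective. -/
def IsHopfian (G : Type*) [Group G] : Prop :=
  ∀ φ : G →* G, Function.Surjective φ → Function.Injective φ

/-- A unital ring is directly finite if `x * y = 1` implies `y * x = 1`. -/
def DirectlyFinite (R : Type*) [Ring R] : Prop :=
  ∀ x y : R, x * y = 1 → y * x = 1

/-- The action of `Γ` on the base group `Γ →₀ A` of the wreath product,
given by `(g • f) x = f (g⁻¹ * x)`. -/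
noncomputable def wreathAction (A : Type*) [AddCommGroup A] (Γ : Type*) [Group Γ] :
    Γ →* MulAut (Multiplicative (Γ →₀ A)) where
  toFun g := AddEquiv.toMultiplicative (Finsupp.domCongr (Equiv.mulLeft g))
  map_one' := by
    apply MulEquiv.ext
    intro f
    apply Multiplicative.toAdd.injective
    apply Finsupp.ext
    intro x
    simp [Finsupp.domCongr_apply]
    rfl
  map_mul' g₁ g₂ := by
    apply MulEquiv.ext
    intro f
    apply Multiplicative.toAdd.injective
    apply Finsupp.ext
    intro x
    simp [Finsupp.domCongr_apply, mul_assoc]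
    rfl

/-- The (restricted) wreath product `A ≀ Γ`: the semidirect product of the group
`Γ →₀ A` of finitely supported functions `Γ → A` (pointwise addition) by `Γ`,
acting by `(g • f) x = f (g⁻¹ * x)`. -/
abbrev WreathProduct (A : Type*) [AddCommGroup A] (Γ : Type*) [Group Γ] : Type _ :=
  SemidirectProduct (Multiplicative (Γ →₀ A)) Γ (wreathAction A Γ)

/-- The base group `Γ →₀ A` of the wreath product, as a subgroup of `A ≀ Γ`. -/
noncomputable def WreathProduct.base (A : Type*) [AddCommGroup A] (Γ : Type*) [Group Γ] :
    Subgroup (WreathProduct A Γ) :=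
  (SemidirectProduct.inl : Multiplicative (Γ →₀ A) →* WreathProduct A Γ).range

/-- The prodiscrete topology on `Γ → A`: the product topology where each factor
carries the discrete topology. -/
def prodiscreteTopology (Γ A : Type*) : TopologicalSpace (Γ → A) :=
  @Pi.topologicalSpace Γ (fun _ => A) (fun _ => ⊥)

/-- A group is surjunctive if every injective cellular automaton (continuous
`Γ`-equivariant self-map of `F^Γ` for a finite alphabet `F`) is surjective. -/
def IsSurjunctive (Γ : Type*) [Group Γ] : Prop :=
  ∀ (F : Type) [Finite F] (τ : (Γ → F) → (Γ → F)),
    @Continuous _ _ (prodiscreteTopology Γ F) (prodiscreteTopology Γ F) τ →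
    (∀ (g : Γ) (u : Γ → F), τ (fun x => u (g⁻¹ * x)) = fun x => τ u (g⁻¹ * x)) →
    Function.Injective τ → Function.Surjective τ

namespace SurjAux
variable {Γ : Type*} [Group Γ] (k : Type*) [CommRing k]

def caShiftHom : Γ →* Module.End k (Γ → k) where
  toFun h :=
    { toFun := fun u g => u (g * h)
      map_add' := fun _ _ => rfl
      map_smul' := fun _ _ => rfl }
  map_one' := by ext u g; simp
  map_mul' h₁ h₂ := by ext u g; simp [mul_assoc]

noncomputable def caRho : MonoidAlgebra k Γ →ₐ[k] Module.End k (Γ → k) :=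
  MonoidAlgebra.lift k _ Γ (caShiftHom k)

lemma caRho_apply (a : MonoidAlgebra k Γ) (w : Γ → k) (g : Γ) :
    caRho k a w g = a.coeff.sum fun h c => c * w (g * h) := by
  rw [caRho, MonoidAlgebra.lift_apply, Finsupp.sum, Finsupp.sum]
  simp [caShiftHom]

open Classical in
lemma caRho_delta (a : MonoidAlgebra k Γ) (g : Γ) :
    caRho k a (fun g' => if g' = 1 then (1 : k) else 0) g = a.coeff g⁻¹ := by
  classical
  rw [caRho_apply, Finsupp.sum]
  have step : ∀ h ∈ a.coeff.support,
      a.coeff h * (if g * h = 1 then (1:k) else 0) = if h = g⁻¹ then a.coeff h else 0 := by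
    intro h _
    by_cases hh : h = g⁻¹
    · subst hh; simp
    · have : g * h ≠ 1 := fun hc => hh (by rw [← one_mul h, ← inv_mul_cancel g, mul_assoc, hc, mul_one])
      simp [this, hh]
  rw [Finset.sum_congr rfl step, Finset.sum_ite_eq' a.coeff.support g⁻¹ (fun h => a.coeff h)]
  by_cases hg : g⁻¹ ∈ a.coeff.support
  · simp [hg]
  · simp [hg, Finsupp.notMem_support_iff.mp hg]

variable (d : ℕ)

noncomputable def caTau (x : Matrix (Fin d) (Fin d) (MonoidAlgebra k Γ))
    (u : Γ → Fin d → k) : Γ → Fin d → k :=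
  fun g i => ∑ j, caRho k (x i j) (fun g' => u g' j) g

lemma caTau_apply_eq (x : Matrix (Fin d) (Fin d) (MonoidAlgebra k Γ)) (u : Γ → Fin d → k)
    (g : Γ) (i : Fin d) :
    caTau k d x u g i = ∑ j, ∑ h ∈ (x i j).coeff.support, (x i j).coeff h * u (g * h) j := by
  simp [caTau, caRho_apply, Finsupp.sum]

lemma caTau_mul (x y : Matrix (Fin d) (Fin d) (MonoidAlgebra k Γ)) (u : Γ → Fin d → k) :
    caTau k d (x * y) u = caTau k d x (caTau k d y u) := by
  funext g i
  calc caTau k d (x * y) u g i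
      = ∑ j, ∑ l, caRho k (x i l) (caRho k (y l j) (fun g'' => u g'' j)) g := by
        simp [caTau, Matrix.mul_apply, map_sum, LinearMap.sum_apply, Finset.sum_apply,
          Module.End.mul_apply]
    _ = ∑ l, ∑ j, caRho k (x i l) (caRho k (y l j) (fun g'' => u g'' j)) g :=
        Finset.sum_comm
    _ = caTau k d x (caTau k d y u) g i := by
        simp only [caTau]
        refine Finset.sum_congr rfl fun l _ => ?_
        rw [show (fun g' => ∑ j, ((caRho k) (y l j)) (fun g'' => u g'' j) g')
            = ∑ j, ((caRho k) (y l j)) (fun g'' => u g'' j) from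
          funext fun g' => (Finset.sum_apply _ _ _).symm, map_sum]
        simp [Finset.sum_apply]

lemma caTau_one (u : Γ → Fin d → k) : caTau k d 1 u = u := by
  funext g i
  classical
  rw [caTau, Finset.sum_eq_single i]
  · simp [Matrix.one_apply]
  · intro j _ hj
    simp [Matrix.one_apply, (Ne.symm hj : ¬ i = j)]
  · intro h; exact absurd (Finset.mem_univ i) h

lemma caTau_equivariant (x : Matrix (Fin d) (Fin d) (MonoidAlgebra k Γ))
    (g : Γ) (u : Γ → Fin d → k) :
    caTau k d x (fun z => u (g⁻¹ * z)) = fun z => caTau k d x u (g⁻¹ * z) := by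
  funext z i
  simp [caTau_apply_eq, mul_assoc]

/-- Injectivity of `x ↦ caTau x`. -/
lemma caTau_faithful (x y : Matrix (Fin d) (Fin d) (MonoidAlgebra k Γ))
    (h : ∀ u, caTau k d x u = caTau k d y u) : x = y := by
  classical
  ext i j h0
  set u : Γ → Fin d → k := fun g' j' => if g' = 1 ∧ j' = j then 1 else 0 with hu
  have key : ∀ (z : Matrix (Fin d) (Fin d) (MonoidAlgebra k Γ)) (g : Γ) (i : Fin d),
      caTau k d z u g i = (z i j).coeff g⁻¹ := by
    intro z g i
    rw [caTau, Finset.sum_eq_single j]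
    · have : (fun g' => u g' j) = fun g' => if g' = 1 then (1:k) else 0 := by
        funext g'; simp [hu]
      rw [this, caRho_delta]
    · intro j' _ hj'
      have : (fun g' => u g' j') = (0 : Γ → k) := by
        funext g'; simp [hu, hj']
      rw [this, map_zero]
      rfl
    · intro hj; exact absurd (Finset.mem_univ j) hj
  have := congrFun (congrFun (h u) h0⁻¹) i
  rw [key x, key y, inv_inv] at this
  exact this

/-- A map determined at each coordinate by a finite window is continuous for the
prodiscrete topologies. -/
lemma continuous_of_window {V W : Type*} (S : Finset Γ)
    (τ : (Γ → V) → (Γ → W)) (f : Γ → (S → V) → W)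
    (hf : ∀ u g, τ u g = f g (fun h => u (g * (h : Γ)))) :
    @Continuous _ _ (prodiscreteTopology Γ V) (prodiscreteTopology Γ W) τ := by
  letI : TopologicalSpace V := ⊥
  letI : TopologicalSpace W := ⊥
  haveI : DiscreteTopology V := ⟨rfl⟩
  haveI : DiscreteTopology W := ⟨rfl⟩
  show Continuous τ
  apply continuous_pi
  intro g
  have : (fun u : Γ → V => τ u g) = (f g) ∘ (fun u (h : S) => u (g * (h : Γ))) :=
    funext fun u => hf u g
  rw [this]
  exact continuous_of_discreteTopology.comp (continuous_pi fun h => continuous_apply _)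

open Classical in
lemma caTau_continuous (x : Matrix (Fin d) (Fin d) (MonoidAlgebra k Γ)) :
    @Continuous _ _ (prodiscreteTopology Γ (Fin d → k)) (prodiscreteTopology Γ (Fin d → k))
      (caTau k d x) := by
  classical
  set S : Finset Γ := Finset.univ.biUnion (fun p : Fin d × Fin d => (x p.1 p.2).coeff.support) with hS
  apply continuous_of_window (S := S)
    (f := fun _ (v : {h // h ∈ S} → (Fin d → k)) i => ∑ j, ∑ h ∈ S.attach, (x i j).coeff (h : Γ) * v h j)
  intro u g
  funext i
  rw [caTau_apply_eq]
  refine Finset.sum_congr rfl fun j _ => ?_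
  rw [Finset.sum_attach S (fun h => (x i j).coeff h * u (g * h) j)]
  apply Finset.sum_subset
  · intro h hh
    exact Finset.mem_biUnion.mpr ⟨(i, j), Finset.mem_univ _, hh⟩
  · intro h _ hns
    rw [Finsupp.notMem_support_iff.mp hns, zero_mul]

/-- Transfer surjunctivity to an arbitrary finite alphabet in any universe. -/
lemma IsSurjunctive.finiteAlphabet (hΓ : IsSurjunctive Γ) (V : Type*) [Finite V]
    (τ : (Γ → V) → (Γ → V))
    (hc : @Continuous _ _ (prodiscreteTopology Γ V) (prodiscreteTopology Γ V) τ)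
    (he : ∀ (g : Γ) (u : Γ → V), τ (fun x => u (g⁻¹ * x)) = fun x => τ u (g⁻¹ * x))
    (hi : Function.Injective τ) : Function.Surjective τ := by
  obtain ⟨N, ⟨e⟩⟩ := Finite.exists_equiv_fin V
  letI tV : TopologicalSpace V := ⊥
  letI tN : TopologicalSpace (Fin N) := ⊥
  haveI : DiscreteTopology V := ⟨rfl⟩
  haveI : DiscreteTopology (Fin N) := ⟨rfl⟩
  set C : (Γ → V) → (Γ → Fin N) := fun u g => e (u g) with hC
  set D : (Γ → Fin N) → (Γ → V) := fun u g => e.symm (u g) with hD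
  have hDC : ∀ u, D (C u) = u := fun u => funext fun g => e.symm_apply_apply _
  have hCD : ∀ u, C (D u) = u := fun u => funext fun g => e.apply_symm_apply _
  set τ' : (Γ → Fin N) → (Γ → Fin N) := fun u => C (τ (D u)) with hτ'
  have hc' : @Continuous _ _ (prodiscreteTopology Γ (Fin N)) (prodiscreteTopology Γ (Fin N)) τ' := by
    show Continuous τ'
    have hCc : Continuous C := continuous_pi fun g =>
      continuous_of_discreteTopology.comp (continuous_apply g)
    have hDc : Continuous D := continuous_pi fun g =>
      continuous_of_discreteTopology.comp (continuous_apply g)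
    exact hCc.comp ((hc : Continuous τ).comp hDc)
  have he' : ∀ (g : Γ) (u : Γ → Fin N), τ' (fun x => u (g⁻¹ * x)) = fun x => τ' u (g⁻¹ * x) := by
    intro g u
    calc τ' (fun x => u (g⁻¹ * x)) = C (τ (fun x => D u (g⁻¹ * x))) := rfl
      _ = C (fun x => τ (D u) (g⁻¹ * x)) := by rw [he g (D u)]
      _ = fun x => τ' u (g⁻¹ * x) := rfl
  have hi' : Function.Injective τ' := by
    intro u v huv
    have : τ (D u) = τ (D v) := by
      have := congrArg D huv
      rwa [hDC, hDC] at this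
    have := hi this
    rw [← hCD u, ← hCD v, this]
  have hs' : Function.Surjective τ' := hΓ (Fin N) τ' hc' he' hi'
  intro v
  obtain ⟨w, hw⟩ := hs' (C v)
  exact ⟨D w, by rw [← hDC (τ (D w))]; show D (τ' w) = v; rw [hw, hDC]⟩

/-- Part 1: over a finite commutative ring, matrix rings over the monoid algebra of a
surjunctive group are directly finite. -/
theorem directlyFinite_matrix_of_finite (hΓ : IsSurjunctive Γ) [Finite k] (d : ℕ)
    (x y : Matrix (Fin d) (Fin d) (MonoidAlgebra k Γ)) (hxy : x * y = 1) : y * x = 1 := by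
  have hleft : ∀ u, caTau k d x (caTau k d y u) = u := by
    intro u; rw [← caTau_mul, hxy, caTau_one]
  have hinj : Function.Injective (caTau k d y) := Function.LeftInverse.injective hleft
  have hsurj : Function.Surjective (caTau k d y) :=
    IsSurjunctive.finiteAlphabet hΓ (Fin d → k) (caTau k d y)
      (caTau_continuous k d y) (caTau_equivariant k d y) hinj
  apply caTau_faithful
  intro u
  obtain ⟨v, rfl⟩ := hsurj u
  rw [caTau_mul, hleft, caTau_one]

/-- Coefficient-wise map of monoid algebras along a ring hom. -/
noncomputable def mapCoeff {R T : Type*} [CommSemiring R] [CommSemiring T]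
    (Γ : Type*) [Monoid Γ] (φ : R →+* T) :
    MonoidAlgebra R Γ →+* MonoidAlgebra T Γ :=
  MonoidAlgebra.liftNCRingHom (MonoidAlgebra.singleOneRingHom.comp φ)
    (MonoidAlgebra.of T Γ) (fun r g => by
      simp only [RingHom.comp_apply, MonoidAlgebra.singleOneRingHom_apply,
        MonoidAlgebra.of_apply, Commute, SemiconjBy, MonoidAlgebra.single_mul_single,
        one_mul, mul_one]
      show MonoidAlgebra.single 1 (φ r) * MonoidAlgebra.single g 1
          = MonoidAlgebra.single g 1 * MonoidAlgebra.single 1 (φ r)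
      rw [MonoidAlgebra.single_mul_single, MonoidAlgebra.single_mul_single, one_mul,
        mul_one, one_mul, mul_one])

lemma mapCoeff_single {R T : Type*} [CommSemiring R] [CommSemiring T]
    (Γ : Type*) [Monoid Γ] (φ : R →+* T) (g : Γ) (c : R) :
    mapCoeff Γ φ (MonoidAlgebra.single g c) = MonoidAlgebra.single g (φ c) := by
  simp only [mapCoeff, MonoidAlgebra.liftNCRingHom, RingHom.coe_mk, MonoidHom.coe_mk]
  rw [show ((MonoidAlgebra.single g c : MonoidAlgebra R Γ)) = MonoidAlgebra.single g c from rfl]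
  erw [MonoidAlgebra.liftNC_single]
  simp [MonoidAlgebra.single_mul_single]

lemma mapCoeff_apply {R T : Type*} [CommSemiring R] [CommSemiring T]
    (Γ : Type*) [Monoid Γ] (φ : R →+* T) (a : MonoidAlgebra R Γ) (h : Γ) :
    (mapCoeff Γ φ a).coeff h = φ (a.coeff h) := by
  classical
  induction a using MonoidAlgebra.induction with
  | zero => simp
  | single_add g c f hg hc ih =>
    rw [map_add]
    simp only [MonoidAlgebra.coeff_add, MonoidAlgebra.coeff_single, Finsupp.add_apply, map_add, ih, mapCoeff_single, Finsupp.single_apply,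
      apply_ite φ, map_zero]


theorem int_isJacobsonRing : IsJacobsonRing ℤ := by
  rw [isJacobsonRing_iff_prime_eq]
  intro P hP
  by_cases hbot : P = ⊥
  · subst hbot
    refine le_antisymm ?_ Ideal.le_jacobson
    intro x hx
    rw [Ideal.mem_jacobson_bot] at hx
    have h1 := hx x
    rw [Int.isUnit_iff] at h1
    have : x = 0 := by rcases h1 with h | h <;> nlinarith [sq_nonneg x]
    simp [this]
  · haveI := IsPrime.to_maximal_ideal hbot
    exact Ideal.jacobson_eq_self_of_isMaximal

/-- In a finitely generated ℤ-algebra which is a domain, any nonzero element avoids some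
maximal ideal with finite residue field. -/
theorem exists_maximal_avoiding_finite_residue (A : Type*) [CommRing A] [IsDomain A]
    [Algebra.FiniteType ℤ A] {a : A} (ha : a ≠ 0) :
    ∃ m : Ideal A, m.IsMaximal ∧ a ∉ m ∧ Finite (A ⧸ m) := by
  haveI : IsJacobsonRing ℤ := int_isJacobsonRing
  haveI : IsJacobsonRing A := isJacobsonRing_of_finiteType (A := ℤ) (B := A)
  have hbotrad : (⊥ : Ideal A).IsRadical := Ideal.bot_prime.isRadical
  have hjac : (⊥ : Ideal A).jacobson = ⊥ := IsJacobsonRing.out ‹IsJacobsonRing A› hbotrad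
  have hnotin : a ∉ (⊥ : Ideal A).jacobson := by rw [hjac]; simpa using ha
  obtain ⟨m, hm, ham⟩ : ∃ m : Ideal A, ((⊥ : Ideal A) ≤ m ∧ m.IsMaximal) ∧ a ∉ m := by
    by_contra hc
    push_neg at hc
    rw [Ideal.jacobson] at hnotin
    exact hnotin (Ideal.mem_sInf.mpr fun {J} hJ => hc J hJ)
  haveI := hm.2
  refine ⟨m, hm.2, ham, ?_⟩
  letI : Field (A ⧸ m) := Ideal.Quotient.field m
  haveI : Module.Finite ℤ (A ⧸ m) := finite_of_finite_type_of_isJacobsonRing ℤ (A ⧸ m)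
  rcases CharP.char_is_prime_or_zero (A ⧸ m) (ringChar (A ⧸ m)) with hprime | hzero
  · haveI : Fact (ringChar (A ⧸ m)).Prime := ⟨hprime⟩
    letI : Algebra (ZMod (ringChar (A ⧸ m))) (A ⧸ m) := ZMod.algebra _ _
    haveI : Module.Finite (ZMod (ringChar (A ⧸ m))) (A ⧸ m) :=
      Module.Finite.of_restrictScalars_finite ℤ (ZMod (ringChar (A ⧸ m))) (A ⧸ m)
    exact Module.finite_of_finite (ZMod (ringChar (A ⧸ m)))
  · haveI : CharP (A ⧸ m) 0 := by rw [← hzero]; infer_instance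
    haveI : CharZero (A ⧸ m) := CharP.charP_to_charZero _
    have hinj : Function.Injective (algebraMap ℤ (A ⧸ m)) := by
      rw [show algebraMap ℤ (A ⧸ m) = Int.castRingHom (A ⧸ m) from Subsingleton.elim _ _]
      exact Int.cast_injective
    exact absurd ((Algebra.IsIntegral.isField_iff_isField hinj).mpr (Field.toIsField _))
      Int.not_isField


end SurjAux


set_option maxHeartbeats 1000000 in
set_option synthInstance.maxHeartbeats 1000000 in
/-- Surjunctive groups satisfy Kaplansky's stable finiteness conjecture. -/
theorem surjunctive_implies_stably_finite (Γ : Type*) [Group Γ]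
    (hΓ : IsSurjunctive Γ) (F : Type*) [Field F] (d : ℕ) (hd : 1 ≤ d) :
    DirectlyFinite (Matrix (Fin d) (Fin d) (MonoidAlgebra F Γ)) := by
  classical
  intro x y hxy
  set S : Finset F := Finset.univ.biUnion
    (fun p : Fin d × Fin d => (x p.1 p.2).coeff.frange ∪ (y p.1 p.2).coeff.frange) with hSdef
  set A : Subalgebra ℤ F := Algebra.adjoin ℤ (S : Set F) with hAdef
  have hmem : ∀ z : Matrix (Fin d) (Fin d) (MonoidAlgebra F Γ), z = x ∨ z = y →
      ∀ i j h, (z i j).coeff h ∈ A := by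
    intro z hz i j h
    by_cases h0 : (z i j).coeff h = 0
    · rw [h0]; exact zero_mem A
    · apply Algebra.subset_adjoin
      have : (z i j).coeff h ∈ S := Finset.mem_biUnion.mpr ⟨(i, j), Finset.mem_univ _, by
        rcases hz with rfl | rfl
        · exact Finset.mem_union_left _ (Finsupp.mem_frange.mpr ⟨h0, h, rfl⟩)
        · exact Finset.mem_union_right _ (Finsupp.mem_frange.mpr ⟨h0, h, rfl⟩)⟩
      exact this
  have hlift : ∀ z : Matrix (Fin d) (Fin d) (MonoidAlgebra F Γ), (∀ i j h, (z i j).coeff h ∈ A) →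
      ∃ z' : Matrix (Fin d) (Fin d) (MonoidAlgebra (↥A) Γ),
        ∀ i j h, (((z' i j).coeff h : ↥A) : F) = (z i j).coeff h := by
    intro z hz
    refine ⟨fun i j => MonoidAlgebra.ofCoeff (Finsupp.onFinset (z i j).coeff.support
      (fun h => (⟨(z i j).coeff h, hz i j h⟩ : ↥A)) (fun h hne => Finsupp.mem_support_iff.mpr ?_)), ?_⟩
    · intro hzero
      exact hne (Subtype.ext (by simpa using hzero))
    · intro i j h
      rfl
  obtain ⟨x', hx'⟩ := hlift x (hmem x (Or.inl rfl))
  obtain ⟨y', hy'⟩ := hlift y (hmem y (Or.inr rfl))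
  let φF : ↥A →+* F := A.val.toRingHom
  have hφF : ∀ b : ↥A, φF b = (b : F) := fun b => rfl
  let ΨF : Matrix (Fin d) (Fin d) (MonoidAlgebra (↥A) Γ) →+*
      Matrix (Fin d) (Fin d) (MonoidAlgebra F Γ) :=
    RingHom.mapMatrix (SurjAux.mapCoeff Γ φF)
  have hΨFapp : ∀ (z' : Matrix (Fin d) (Fin d) (MonoidAlgebra (↥A) Γ)) i j,
      ΨF z' i j = SurjAux.mapCoeff Γ φF (z' i j) := fun z' i j => rfl
  have hΨFx : ΨF x' = x := by
    refine Matrix.ext fun i j => MonoidAlgebra.ext (Finsupp.ext fun h => ?_)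
    rw [hΨFapp, SurjAux.mapCoeff_apply, hφF, hx']
  have hΨFy : ΨF y' = y := by
    refine Matrix.ext fun i j => MonoidAlgebra.ext (Finsupp.ext fun h => ?_)
    rw [hΨFapp, SurjAux.mapCoeff_apply, hφF, hy']
  have hΨFinj : Function.Injective ΨF := by
    intro a b hab
    refine Matrix.ext fun i j => MonoidAlgebra.ext (Finsupp.ext fun h => ?_)
    have e1 : SurjAux.mapCoeff Γ φF (a i j) = SurjAux.mapCoeff Γ φF (b i j) := by
      rw [← hΨFapp, ← hΨFapp, hab]
    have e2 := congrArg (fun v : MonoidAlgebra F Γ => v.coeff h) e1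
    rw [SurjAux.mapCoeff_apply, SurjAux.mapCoeff_apply, hφF, hφF] at e2
    exact Subtype.ext e2
  have h1 : x' * y' = 1 := hΨFinj (by rw [map_mul, hΨFx, hΨFy, hxy, map_one])
  suffices hyx : y' * x' = 1 by
    have := congrArg ΨF hyx
    rw [map_mul, hΨFx, hΨFy, map_one] at this
    exact this
  by_contra hne
  have hwit : ∃ i j h,
      ((y' * x') i j).coeff h ≠ ((1 : Matrix (Fin d) (Fin d) (MonoidAlgebra (↥A) Γ)) i j).coeff h := by
    by_contra hc
    push_neg at hc
    exact hne (Matrix.ext fun i j => MonoidAlgebra.ext (Finsupp.ext fun h => hc i j h))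
  obtain ⟨i0, j0, h0, hw⟩ := hwit
  haveI : Algebra.FiniteType ℤ ↥A :=
    (Subalgebra.fg_iff_finiteType A).mp (Subalgebra.fg_adjoin_finset S)
  obtain ⟨m, hmmax, ham, hfin⟩ := SurjAux.exists_maximal_avoiding_finite_residue (↥A)
    (a := ((y' * x') i0 j0).coeff h0 - ((1 : Matrix (Fin d) (Fin d) (MonoidAlgebra (↥A) Γ)) i0 j0).coeff h0)
    (sub_ne_zero.mpr hw)
  haveI := hmmax
  haveI := hfin
  let φQ : ↥A →+* ↥A ⧸ m := Ideal.Quotient.mk m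
  let ΨQ : Matrix (Fin d) (Fin d) (MonoidAlgebra (↥A) Γ) →+*
      Matrix (Fin d) (Fin d) (MonoidAlgebra (↥A ⧸ m) Γ) :=
    RingHom.mapMatrix (SurjAux.mapCoeff Γ φQ)
  have h2 : ΨQ x' * ΨQ y' = 1 := by rw [← map_mul, h1, map_one]
  have h3 : ΨQ y' * ΨQ x' = 1 :=
    SurjAux.directlyFinite_matrix_of_finite (↥A ⧸ m) hΓ d (ΨQ x') (ΨQ y') h2
  have h4 : ΨQ (y' * x') = ΨQ 1 := by rw [map_mul, h3, map_one]
  have e1 : SurjAux.mapCoeff Γ φQ ((y' * x') i0 j0)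
      = SurjAux.mapCoeff Γ φQ ((1 : Matrix (Fin d) (Fin d) (MonoidAlgebra (↥A) Γ)) i0 j0) :=
    congrFun (congrFun h4 i0) j0
  have e2 := congrArg (fun v : MonoidAlgebra (↥A ⧸ m) Γ => v.coeff h0) e1
  rw [SurjAux.mapCoeff_apply, SurjAux.mapCoeff_apply] at e2
  exact ham (Ideal.Quotient.eq_zero_iff_mem.mp (by rw [map_sub, e2, sub_self]))
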